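/- Let U be a nonempty finite linearly ordered type and let A and B be nonempty finite subsets of U. If σ is a permutation of U chosen uniformly at random, then the probability that min over a ∈ A of σ(a) equals min over b ∈ B of σ(b) is exactly |A ∩ B| / |A ∪ B|, the Jaccard coefficient of A and B. -/

import Mathlib

open Finset

theorem minhash_collision_probability (U : Type*) [Fintype U] [Nonempty U] [LinearOrder U]
    (A B : Finset U) (hA : A.Nonempty) (hB : B.Nonempty) :
    (PMF.uniformOfFintype (Equiv.Perm U)).toOuterMeasure
        {σ : Equiv.Perm U | A.inf' hA ⇑σ = B.inf' hB ⇑σ} =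
      ((A ∩ B).card : ENNReal) / ((A ∪ B).card : ENNReal) := by
  classical
  have hsne : (A ∪ B).Nonempty := hA.mono subset_union_left
  -- argmin over A ∪ B
  set am : Equiv.Perm U → U := fun σ => σ.symm ((A ∪ B).inf' hsne σ) with ham
  have ham_spec : ∀ σ : Equiv.Perm U, am σ ∈ A ∪ B ∧ σ (am σ) = (A ∪ B).inf' hsne σ := by
    intro σ
    obtain ⟨a, haU, haeq⟩ := Finset.exists_mem_eq_inf' hsne σ
    have : am σ = a := by simp [ham, haeq]
    constructor
    · rw [this]; exact haU
    · simp [ham]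
  have ham_le : ∀ (σ : Equiv.Perm U) (y : U), y ∈ A ∪ B → σ (am σ) ≤ σ y := by
    intro σ y hy
    rw [(ham_spec σ).2]
    exact Finset.inf'_le _ hy
  have ham_unique : ∀ (σ : Equiv.Perm U) (x : U), x ∈ A ∪ B →
      (∀ y ∈ A ∪ B, σ x ≤ σ y) → am σ = x := by
    intro σ x hx h
    have h1 := ham_le σ x hx
    have h2 := h _ (ham_spec σ).1
    exact σ.injective (le_antisymm h1 h2)
  -- event characterization
  have hevent : ∀ σ : Equiv.Perm U, (A.inf' hA ⇑σ = B.inf' hB ⇑σ) ↔ am σ ∈ A ∩ B := by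
    intro σ
    constructor
    · intro h
      obtain ⟨a, haA, haeq⟩ := Finset.exists_mem_eq_inf' hA ⇑σ
      obtain ⟨b, hbB, hbeq⟩ := Finset.exists_mem_eq_inf' hB ⇑σ
      have hab : a = b := σ.injective (by rw [← haeq, ← hbeq, h])
      have : am σ = a := by
        refine ham_unique σ a (mem_union_left _ haA) ?_
        intro y hy
        rcases mem_union.mp hy with hy | hy
        · rw [← haeq]; exact Finset.inf'_le _ hy
        · rw [← haeq, h, hbeq]; exact hbeq ▸ Finset.inf'_le _ hy
      rw [this, mem_inter]
      exact ⟨haA, hab ▸ hbB⟩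
    · intro h
      rw [mem_inter] at h
      have h1 : A.inf' hA ⇑σ = σ (am σ) := by
        refine le_antisymm (Finset.inf'_le _ h.1) (Finset.le_inf' _ _ fun y hy => ?_)
        exact ham_le σ y (mem_union_left _ hy)
      have h2 : B.inf' hB ⇑σ = σ (am σ) := by
        refine le_antisymm (Finset.inf'_le _ h.2) (Finset.le_inf' _ _ fun y hy => ?_)
        exact ham_le σ y (mem_union_right _ hy)
      rw [h1, h2]
  -- fibers have equal cardinality
  have hswap_am : ∀ (x y : U), x ∈ A ∪ B → y ∈ A ∪ B → ∀ σ : Equiv.Perm U,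
      am (σ * Equiv.swap x y) = Equiv.swap x y (am σ) := by
    intro x y hx hy σ
    refine ham_unique _ _ ?_ ?_
    · by_cases h1 : am σ = x
      · rw [h1, Equiv.swap_apply_left]; exact hy
      · by_cases h2 : am σ = y
        · rw [h2, Equiv.swap_apply_right]; exact hx
        · rw [Equiv.swap_apply_of_ne_of_ne h1 h2]; exact (ham_spec σ).1
    · intro z hz
      have : (σ * Equiv.swap x y) (Equiv.swap x y (am σ)) = σ (am σ) := by
        simp [Equiv.Perm.mul_apply]
      rw [this]
      have hz' : Equiv.swap x y z ∈ A ∪ B := by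
        by_cases h1 : z = x
        · simpa [h1, Equiv.swap_apply_left] using hy
        · by_cases h2 : z = y
          · simpa [h2, Equiv.swap_apply_right] using hx
          · simpa [Equiv.swap_apply_of_ne_of_ne h1 h2] using hz
      have := ham_le σ _ hz'
      simpa [Equiv.Perm.mul_apply] using this
  have hfiber_card : ∀ (x y : U), x ∈ A ∪ B → y ∈ A ∪ B →
      (Finset.univ.filter (fun σ : Equiv.Perm U => am σ = x)).card =
      (Finset.univ.filter (fun σ : Equiv.Perm U => am σ = y)).card := by
    intro x y hx hy
    refine Finset.card_bij' (fun σ _ => σ * Equiv.swap x y) (fun σ _ => σ * Equiv.swap x y)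
      ?_ ?_ ?_ ?_
    · intro σ hσ
      rw [mem_filter] at hσ ⊢
      refine ⟨mem_univ _, ?_⟩
      rw [hswap_am x y hx hy σ, hσ.2, Equiv.swap_apply_left]
    · intro σ hσ
      rw [mem_filter] at hσ ⊢
      refine ⟨mem_univ _, ?_⟩
      rw [hswap_am x y hx hy σ, hσ.2, Equiv.swap_apply_right]
    · intro σ _; simp [mul_assoc]
    · intro σ _; simp [mul_assoc]
  obtain ⟨x0, hx0⟩ := hsne
  set c : ℕ := (Finset.univ.filter (fun σ : Equiv.Perm U => am σ = x0)).card with hc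
  -- c ≠ 0
  have hc0 : c ≠ 0 := by
    set m := Finset.univ.min' (Finset.univ_nonempty (α := U)) with hm
    have hmem : Equiv.swap x0 m ∈ Finset.univ.filter (fun σ : Equiv.Perm U => am σ = x0) := by
      rw [mem_filter]
      refine ⟨mem_univ _, ham_unique _ _ hx0 ?_⟩
      intro y hy
      rw [Equiv.swap_apply_left]
      exact Finset.min'_le _ _ (mem_univ _)
    exact Finset.card_ne_zero_of_mem hmem
  -- total count
  have htotal : Fintype.card (Equiv.Perm U) = (A ∪ B).card * c := by
    rw [← Finset.card_univ]
    rw [Finset.card_eq_sum_card_fiberwise (f := am) (t := A ∪ B)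
      (fun σ _ => (ham_spec σ).1)]
    rw [Finset.sum_congr rfl (fun x hx => hfiber_card x x0 hx hx0), Finset.sum_const,
      smul_eq_mul]
  -- event count
  set P : Finset (Equiv.Perm U) :=
    Finset.univ.filter (fun σ => A.inf' hA ⇑σ = B.inf' hB ⇑σ) with hP
  have hPcount : P.card = (A ∩ B).card * c := by
    have hPam : P = Finset.univ.filter (fun σ => am σ ∈ A ∩ B) := by
      ext σ; simp [hP, hevent σ]
    rw [hPam]
    rw [Finset.card_eq_sum_card_fiberwise (f := am) (t := A ∩ B)
      (s := Finset.univ.filter (fun σ : Equiv.Perm U => am σ ∈ A ∩ B))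
      (fun σ hσ => (mem_filter.mp hσ).2)]
    have : ∀ x ∈ A ∩ B,
        ((Finset.univ.filter (fun σ : Equiv.Perm U => am σ ∈ A ∩ B)).filter
          (fun σ => am σ = x)).card = c := by
      intro x hx
      have : (Finset.univ.filter (fun σ : Equiv.Perm U => am σ ∈ A ∩ B)).filter
          (fun σ => am σ = x) = Finset.univ.filter (fun σ : Equiv.Perm U => am σ = x) := by
        ext σ
        simp only [mem_filter, mem_univ, true_and]
        exact ⟨fun h => h.2, fun h => ⟨h ▸ hx, h⟩⟩
      rw [this]
      exact hfiber_card x x0 (mem_union_left _ (mem_of_mem_inter_left hx)) hx0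
    rw [Finset.sum_congr rfl this, Finset.sum_const, smul_eq_mul]
  -- compute the measure
  rw [PMF.toOuterMeasure_apply_fintype]
  have : ∀ σ : Equiv.Perm U,
      Set.indicator {σ : Equiv.Perm U | A.inf' hA ⇑σ = B.inf' hB ⇑σ}
        (PMF.uniformOfFintype (Equiv.Perm U)) σ =
      if σ ∈ P then (Fintype.card (Equiv.Perm U) : ENNReal)⁻¹ else 0 := by
    intro σ
    by_cases h : A.inf' hA ⇑σ = B.inf' hB ⇑σ
    · simp [Set.indicator, Set.mem_setOf_eq, h, hP, PMF.uniformOfFintype_apply]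
    · simp [Set.indicator, Set.mem_setOf_eq, h, hP]
  rw [Finset.sum_congr rfl (fun σ _ => this σ), Finset.sum_ite_mem,
    Finset.univ_inter, Finset.sum_const]
  have hcne : (c : ENNReal) ≠ 0 := by exact_mod_cast hc0
  have hcnt : (c : ENNReal) ≠ ⊤ := ENNReal.natCast_ne_top _
  rw [nsmul_eq_mul, hPcount, htotal, ← div_eq_mul_inv]
  push_cast
  exact ENNReal.mul_div_mul_right _ _ hcne hcnt
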